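/- For every X-cactus N, the set C(N) of circular partitions induced by the blocks of N is a compatible set of circular partitions of X. -/

import Mathlib

noncomputable section

namespace PhyloCactus

/-- A list of sets is a (linear ordering of a) partition of `X`: at least two parts,
no repeated parts, all parts nonempty, and every element of `X` lies in exactly one part. -/
def IsPartList (X : Type) (l : List (Set X)) : Prop :=
  2 ≤ l.length ∧ l.Nodup ∧ (∀ A ∈ l, A.Nonempty) ∧
    ∀ x : X, ∃! A : Set X, A ∈ l ∧ x ∈ A

/-- One step of circular re-ordering of a list: a cyclic rotation or a reversal. -/
def CircStep (X : Type) (l l' : List (Set X)) : Prop :=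
  l' = l.rotate 1 ∨ l' = l.reverse

/-- Linear orderings of partitions of `X`. -/
abbrev PartList (X : Type) := {l : List (Set X) // IsPartList X l}

/-- Two linear orderings are circularly equivalent if they are related by the
equivalence relation generated by rotations and reversals. -/
def circSetoid (X : Type) : Setoid (PartList X) where
  r a b := Relation.EqvGen (CircStep X) a.1 b.1
  iseqv := ⟨fun _ => Relation.EqvGen.refl _, fun h => Relation.EqvGen.symm _ _ h,
    fun h h' => Relation.EqvGen.trans _ _ _ h h'⟩

/-- A circular partition of `X`: a partition together with a circular ordering of
its parts, i.e. an equivalence class of linear orderings of partitions of `X`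
under cyclic rotation and reversal. -/
def CircPart (X : Type) := Quotient (circSetoid X)

/-- The circular partition determined by a linear ordering of a partition. -/
def CircPart.mk {X : Type} (l : PartList X) : CircPart X :=
  Quotient.mk (circSetoid X) l

/-- The set of parts of a circular partition. -/
def CircPart.parts {X : Type} (σ : CircPart X) : Set (Set X) :=
  {A | ∃ l : PartList X, σ = CircPart.mk l ∧ A ∈ l.1}

/-- The number of parts of a circular partition. -/
def CircPart.numParts {X : Type} (σ : CircPart X) : ℕ := σ.parts.ncard

/-- A circular partition is a split if it has exactly two parts. -/
def CircPart.IsSplit {X : Type} (σ : CircPart X) : Prop :=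
  ∃ l : PartList X, σ = CircPart.mk l ∧ l.1.length = 2

/-- A partition of `X`, as a set of parts. -/
def IsPartition (X : Type) (π : Set (Set X)) : Prop :=
  2 ≤ π.ncard ∧ (∀ A ∈ π, A.Nonempty) ∧ ∀ x : X, ∃! A : Set X, A ∈ π ∧ x ∈ A

/-- Two partitions of `X` are compatible if some part of the first and some part
of the second have union `X`. -/
def PartCompatible {X : Type} (π π' : Set (Set X)) : Prop :=
  ∃ A ∈ π, ∃ B ∈ π', A ∪ B = (Set.univ : Set X)

/-- A collection of partitions is compatible if any two distinct members are compatible. -/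
def PartFamilyCompatible {X : Type} (Ps : Set (Set (Set X))) : Prop :=
  ∀ π ∈ Ps, ∀ π' ∈ Ps, π ≠ π' → PartCompatible π π'

/-- Two circular partitions are compatible if their underlying partitions are. -/
def CircPart.Compatible {X : Type} (σ σ' : CircPart X) : Prop :=
  PartCompatible σ.parts σ'.parts

/-- A set of circular partitions is compatible if any two distinct members are compatible. -/
def CompatibleFamily {X : Type} (C : Set (CircPart X)) : Prop :=
  ∀ σ ∈ C, ∀ τ ∈ C, σ ≠ τ → σ.Compatible τ

/-- `MergeStep σ σ'` holds if `σ'` is obtained from `σ` by merging two parts that are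
adjacent in the circular ordering of `σ` into a single part. -/
def MergeStep {X : Type} (σ σ' : CircPart X) : Prop :=
  ∃ (A B : Set X) (t : List (Set X)) (h : IsPartList X (A :: B :: t))
    (h' : IsPartList X ((A ∪ B) :: t)),
    σ = CircPart.mk ⟨A :: B :: t, h⟩ ∧ σ' = CircPart.mk ⟨(A ∪ B) :: t, h'⟩

/-- `σ ≼ τ`: either `σ = τ`, or `σ` is proper and `σ` is obtained from `τ` by a finite
sequence of merges. -/
def CircPart.Preceq {X : Type} (σ τ : CircPart X) : Prop :=
  σ = τ ∨ (¬ σ.IsSplit ∧ Relation.ReflTransGen MergeStep τ σ)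

/-- A domination map from `C` to `C'`: an injective map with `σ ≼ L σ` for all `σ ∈ C`. -/
def IsDominationMap {X : Type} (C C' : Set (CircPart X))
    (L : CircPart X → CircPart X) : Prop :=
  Set.MapsTo L C C' ∧ Set.InjOn L C ∧ ∀ σ ∈ C, CircPart.Preceq σ (L σ)

/-- `C` is dominated by `C'` if there is a domination map from `C` to `C'`. -/
def Dominates {X : Type} (C C' : Set (CircPart X)) : Prop :=
  ∃ L, IsDominationMap C C' L

end PhyloCactus

namespace PhyloCactus

/-- A graph is a cactus if any two distinct cycles share at most one vertex. -/
def IsCactus {V : Type} (G : SimpleGraph V) : Prop :=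
  ∀ ⦃u v : V⦄ (c : G.Walk u u) (c' : G.Walk v v), c.IsCycle → c'.IsCycle →
    {e | e ∈ c.edges} ≠ {e | e ∈ c'.edges} →
    Set.Subsingleton {w | w ∈ c.support ∧ w ∈ c'.support}

/-- An `X`-cactus: a finite connected cactus together with a labelling map
`φ : X → V` whose image contains every vertex of degree at most two. -/
structure XCactus (X : Type) where
  V : Type
  fintypeV : Fintype V
  G : SimpleGraph V
  connected : G.Connected
  cactus : IsCactus G
  φ : X → V
  labels : ∀ v : V, (G.neighborSet v).ncard ≤ 2 → v ∈ Set.range φ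

namespace XCactus

variable {X : Type}

/-- The trivial `X`-cactus consists of a single vertex. -/
def IsTrivial (N : XCactus X) : Prop := ∀ u v : N.V, u = v

/-- The labels reachable from `w` after deleting the edge set `s`. -/
def compPart (N : XCactus X) (s : Set (Sym2 N.V)) (w : N.V) : Set X :=
  {x : X | (N.G.deleteEdges s).Reachable w (N.φ x)}

/-- The list of label-classes of the connected components met along `vs`
after deleting the edge set `s`. -/
def blockList (N : XCactus X) (s : Set (Sym2 N.V)) (vs : List N.V) : List (Set X) :=
  vs.map (N.compPart s)

/-- The set `C(N)` of circular partitions of `X` induced by the blocks of `N`: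
each cut edge induces a split and each cycle induces a circular partition, whose
circular order is given by the cyclic order of the vertices on the cycle. -/
def circSet (N : XCactus X) : Set (CircPart X) :=
  {σ | ∃ l : PartList X, σ = CircPart.mk l ∧
    ((∃ u v : N.V, N.G.IsBridge s(u, v) ∧ l.1 = N.blockList {s(u, v)} [u, v]) ∨
      (∃ (v : N.V) (c : N.G.Walk v v), c.IsCycle ∧
        l.1 = N.blockList {e | e ∈ c.edges} c.support.tail))}

/-- The set `C_b(N)` of splits of `N`. -/
def splitSet (N : XCactus X) : Set (CircPart X) := {σ ∈ N.circSet | σ.IsSplit}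

/-- The set `C_p(N)` of proper circular partitions of `N`. -/
def properSet (N : XCactus X) : Set (CircPart X) := {σ ∈ N.circSet | ¬ σ.IsSplit}

/-- Isomorphism of `X`-cactuses: a graph isomorphism commuting with the labelling maps. -/
def Isom (N N' : XCactus X) : Prop :=
  ∃ f : N.V ≃ N'.V, (∀ u v : N.V, N.G.Adj u v ↔ N'.G.Adj (f u) (f v)) ∧
    ∀ x : X, f (N.φ x) = N'.φ x

theorem isom_refl (N : XCactus X) : N.Isom N :=
  ⟨Equiv.refl _, fun _ _ => Iff.rfl, fun _ => rfl⟩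

theorem isom_symm {N N' : XCactus X} (h : N.Isom N') : N'.Isom N := by
  obtain ⟨f, hadj, hphi⟩ := h
  refine ⟨f.symm, fun u v => ?_, fun x => ?_⟩
  · simpa using (hadj (f.symm u) (f.symm v)).symm
  · rw [← hphi x]; simp

theorem isom_trans {a b c : XCactus X} (h1 : a.Isom b) (h2 : b.Isom c) : a.Isom c := by
  obtain ⟨f, hadj, hphi⟩ := h1
  obtain ⟨g, hadj', hphi'⟩ := h2
  exact ⟨f.trans g, fun u v => (hadj u v).trans (hadj' (f u) (f v)),
    fun x => by simp [Equiv.trans_apply, hphi, hphi']⟩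

/-- The degree of a vertex. -/
def deg (N : XCactus X) (v : N.V) : ℕ := (N.G.neighborSet v).ncard

/-- A leaf is a vertex of degree one. -/
def IsLeaf (N : XCactus X) (v : N.V) : Prop := N.deg v = 1

/-- A phylogenetic `X`-cactus: the labelling map is a bijection onto the leaves. -/
def Phylogenetic (N : XCactus X) : Prop :=
  Function.Injective N.φ ∧ Set.range N.φ = {v : N.V | N.IsLeaf v}

/-- A binary `X`-cactus: every internal vertex has degree three. -/
def Binary (N : XCactus X) : Prop := ∀ v : N.V, ¬ N.IsLeaf v → N.deg v = 3

/-- A vertex is contained in some cycle. -/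
def InCycle (N : XCactus X) (v : N.V) : Prop :=
  ∃ (w : N.V) (c : N.G.Walk w w), c.IsCycle ∧ v ∈ c.support

/-- A vertex is contained in some tiny cycle (a cycle with exactly three vertices). -/
def InTinyCycle (N : XCactus X) (v : N.V) : Prop :=
  ∃ (w : N.V) (c : N.G.Walk w w), c.IsCycle ∧ c.length = 3 ∧ v ∈ c.support

/-- An `X`-tree is an `X`-cactus whose underlying graph is a tree (i.e. acyclic). -/
def IsXTree (N : XCactus X) : Prop := N.G.IsAcyclic

end XCactus

/-- The rank of an `X`-cactus: `ρ(N) = Σ_{σ ∈ C(N)} max 1 (|σ| - 2)`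
(`ρ(N) = 0` for the trivial `X`-cactus, whose `C(N)` is empty). -/
def rho {X : Type} (N : XCactus X) : ℤ :=
  ∑ᶠ σ ∈ N.circSet, max 1 ((σ.numParts : ℤ) - 2)

end PhyloCactus

namespace PhyloCactus

variable {X : Type}

/-- `X`-cactuses up to isomorphism. -/
def xcactusSetoid (X : Type) : Setoid (XCactus X) where
  r := XCactus.Isom
  iseqv := ⟨XCactus.isom_refl, XCactus.isom_symm, XCactus.isom_trans⟩

/-- `G(X)`: the set of `X`-cactuses up to isomorphism. -/
def GX (X : Type) := Quotient (xcactusSetoid X)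

/-- The isomorphism class of an `X`-cactus. -/
def GX.mk (N : XCactus X) : GX X := Quotient.mk (xcactusSetoid X) N

/-- `f : N.V → N'.V` realises `N'` as the result of collapsing the set `S` of
vertices of `N` to a single vertex (keeping all adjacencies between distinct
images, and relabelling by composition). -/
def ContractionMapSpec (N N' : XCactus X) (S : Set N.V) (f : N.V → N'.V) : Prop :=
  Function.Surjective f ∧
  (∀ a b : N.V, f a = f b ↔ (a = b ∨ (a ∈ S ∧ b ∈ S))) ∧
  (∀ a b : N.V, N'.G.Adj (f a) (f b) ↔
    (f a ≠ f b ∧ ∃ a' b' : N.V, f a' = f a ∧ f b' = f b ∧ N.G.Adj a' b')) ∧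
  (∀ x : X, N'.φ x = f (N.φ x))

/-- `N'` is obtained from `N` by contracting an edge `{u, v}` that is not
contained in a tiny cycle (equivalently, `u` and `v` have no common neighbour):
`u` and `v` are identified and the new vertex is labelled by
`φ⁻¹(u) ∪ φ⁻¹(v)`. -/
def IsEdgeContraction (N N' : XCactus X) : Prop :=
  ∃ (u v : N.V) (f : N.V → N'.V), N.G.Adj u v ∧
    (¬ ∃ w : N.V, N.G.Adj u w ∧ N.G.Adj v w) ∧
    ContractionMapSpec N N' {u, v} f

/-- `N'` is obtained from `N` by a triple contraction of a tiny cycle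
`v₁, v₂, v₃`: the cycle is collapsed to a single vertex, labelled by the union
of the labels of `v₁, v₂, v₃`, adjacent to exactly the former outside
neighbours of the cycle. -/
def IsTripleContraction (N N' : XCactus X) : Prop :=
  ∃ (v₁ v₂ v₃ : N.V) (f : N.V → N'.V),
    N.G.Adj v₁ v₂ ∧ N.G.Adj v₂ v₃ ∧ N.G.Adj v₁ v₃ ∧
    ContractionMapSpec N N' {v₁, v₂, v₃} f

/-- A contraction is an edge contraction or a triple contraction. -/
def IsContraction (N N' : XCactus X) : Prop :=
  IsEdgeContraction N N' ∨ IsTripleContraction N N'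

/-- One contraction step on isomorphism classes of `X`-cactuses. -/
def GStep (a b : GX X) : Prop :=
  ∃ N N' : XCactus X, a = GX.mk N ∧ b = GX.mk N' ∧ IsContraction N N'

/-- The order on `G(X)`: `a ≤ b` iff there is a (possibly empty) sequence of
contractions transforming `b` into `a`. -/
def GLe (a b : GX X) : Prop := Relation.ReflTransGen GStep b a

/-- The associated strict order on `G(X)`. -/
def GLt (a b : GX X) : Prop := GLe a b ∧ a ≠ b

/-- One edge-contraction step between (classes of) `X`-trees. -/
def TStep (a b : GX X) : Prop :=
  ∃ N N' : XCactus X, XCactus.IsXTree N ∧ XCactus.IsXTree N' ∧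
    a = GX.mk N ∧ b = GX.mk N' ∧ IsEdgeContraction N N'

/-- The order on `T(X)`: `a ≤ b` iff `a` is obtained from `b` by a (possibly
empty) sequence of edge contractions of `X`-trees. -/
def TLe (a b : GX X) : Prop := Relation.ReflTransGen TStep b a

end PhyloCactus

namespace PhyloCactus

/-- A semi-labelled `X`-tree: a finite tree together with a map `ψ : X → V`
whose image contains every leaf. -/
structure SemiTree (X : Type) where
  V : Type
  fintypeV : Fintype V
  G : SimpleGraph V
  isTree : G.IsTree
  ψ : X → V
  leaves : ∀ v : V, (G.neighborSet v).ncard = 1 → v ∈ Set.range ψ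

namespace SemiTree

variable {X : Type}

/-- The partition `π(v)` of `X` induced by deleting the vertex `v`: its parts
are the label sets of the connected components of `T - v`. -/
def vertexPart (T : SemiTree X) (v : T.V) : Set (Set X) :=
  {P | ∃ w : T.V, w ≠ v ∧
    P = {x : X | (T.G.deleteEdges {e | v ∈ e}).Reachable w (T.ψ x)}}

/-- The split `π(e)` of `X` induced by deleting the edge `e`: its parts are the
label sets of the connected components of `T - e`. -/
def edgePart (T : SemiTree X) (e : Sym2 T.V) : Set (Set X) :=
  {P | ∃ w : T.V, P = {x : X | (T.G.deleteEdges {e}).Reachable w (T.ψ x)}}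

end SemiTree

/-- A semi-tree representation of a collection `Ps` of partitions of `X`:
a semi-labelled `X`-tree together with a map `κ` assigning to each `π ∈ Ps`
either an unlabelled vertex of degree at least three inducing `π`, or an edge
inducing `π`. -/
structure SemiTreeRep (X : Type) (Ps : Set (Set (Set X))) where
  T : SemiTree X
  κ : Set (Set X) → T.V ⊕ Sym2 T.V
  spec : ∀ π ∈ Ps,
    (∃ v : T.V, κ π = Sum.inl v ∧ v ∉ Set.range T.ψ ∧
      3 ≤ (T.G.neighborSet v).ncard ∧ T.vertexPart v = π) ∨
    (∃ e : Sym2 T.V, κ π = Sum.inr e ∧ e ∈ T.G.edgeSet ∧ T.edgePart e = π)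

namespace SemiTreeRep

variable {X : Type} {Ps : Set (Set (Set X))}

/-- `h(e, κ)`: the number of partitions `π ∈ Ps` with `κ(π)` equal to `e` or to
one of its endpoints. -/
def h (R : SemiTreeRep X Ps) (e : Sym2 R.T.V) : ℕ :=
  {π ∈ Ps | (∃ v, v ∈ e ∧ R.κ π = Sum.inl v) ∨ R.κ π = Sum.inr e}.ncard

/-- A perfect semi-tree representation: `h(e, κ) = 1` for every edge, and `κ(π)`
is an edge exactly when `π` is a split (a representation on the trivial
one-vertex tree is perfect by convention). -/
def Perfect (R : SemiTreeRep X Ps) : Prop :=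
  (∀ u v : R.T.V, u = v) ∨
  ((∀ e ∈ R.T.G.edgeSet, R.h e = 1) ∧
    ∀ π ∈ Ps, ((∃ e, R.κ π = Sum.inr e) ↔ π.ncard = 2))

/-- Isomorphism of semi-tree representations. -/
def Isom (R R' : SemiTreeRep X Ps) : Prop :=
  ∃ f : R.T.V ≃ R'.T.V,
    (∀ u v : R.T.V, R.T.G.Adj u v ↔ R'.T.G.Adj (f u) (f v)) ∧
    (∀ x : X, f (R.T.ψ x) = R'.T.ψ x) ∧
    ∀ π ∈ Ps, R'.κ π = Sum.map f (Sym2.map f) (R.κ π)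

end SemiTreeRep

variable {X : Type}

/-- The edge set of the incompatibility graph `I(N₁, N₂)`: pairs of distinct
incompatible circular partitions of `C(N₁) ∪ C(N₂)`. -/
def IncompatEdges (N₁ N₂ : XCactus X) : Set (Sym2 (CircPart X)) :=
  {p | ∃ σ τ : CircPart X, p = s(σ, τ) ∧
    σ ∈ N₁.circSet ∪ N₂.circSet ∧ τ ∈ N₁.circSet ∪ N₂.circSet ∧
    σ ≠ τ ∧ ¬ σ.Compatible τ}

/-- The set `W₀` of isolated vertices of the incompatibility graph `I(N₁, N₂)`. -/
def IsolatedVerts (N₁ N₂ : XCactus X) : Set (CircPart X) :=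
  {σ ∈ N₁.circSet ∪ N₂.circSet |
    ∀ τ ∈ N₁.circSet ∪ N₂.circSet, τ ≠ σ → σ.Compatible τ}

/-- The incompatibility graph `I(N₁, N₂)` is a matching: every vertex has degree
at most one. -/
def IncompatIsMatching (N₁ N₂ : XCactus X) : Prop :=
  ∀ σ ∈ N₁.circSet ∪ N₂.circSet,
    Set.Subsingleton
      {τ | τ ∈ N₁.circSet ∪ N₂.circSet ∧ τ ≠ σ ∧ ¬ σ.Compatible τ}

/-- A resolution of the incompatibility graph: an injective map on its edges
assigning to each edge an upper bound of its two endpoints in `(C(X), ≼)`. -/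
def IsResolution (N₁ N₂ : XCactus X) (lam : Sym2 (CircPart X) → CircPart X) : Prop :=
  Set.InjOn lam (IncompatEdges N₁ N₂) ∧
  ∀ p ∈ IncompatEdges N₁ N₂, ∀ σ, σ ∈ p → CircPart.Preceq σ (lam p)

/-- A minimal resolution: each `lam p` is a least upper bound of the endpoints
of `p` in `(C(X), ≼)`, i.e. no upper bound of the endpoints is strictly below it. -/
def IsMinimalResolution (N₁ N₂ : XCactus X)
    (lam : Sym2 (CircPart X) → CircPart X) : Prop :=
  IsResolution N₁ N₂ lam ∧
  ∀ p ∈ IncompatEdges N₁ N₂, ∀ μ : CircPart X,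
    (∀ σ, σ ∈ p → CircPart.Preceq σ μ) →
    ¬ (CircPart.Preceq μ (lam p) ∧ μ ≠ lam p)

/-- The set of lower bounds in `(C(X), ≼)` of an `m`-tuple of circular partitions. -/
def TupleLowerBounds (m : ℕ) (μ : Fin m → CircPart X) : Set (CircPart X) :=
  {ν | ∀ i : Fin m, CircPart.Preceq ν (μ i)}

/-- The set `glb(μ₁, …, μ_m)` of greatest lower bounds of an `m`-tuple in
`(C(X), ≼)`: lower bounds above which there is no strictly larger lower bound. -/
def TupleGlb (m : ℕ) (μ : Fin m → CircPart X) : Set (CircPart X) :=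
  {ν ∈ TupleLowerBounds m μ |
    ∀ ν' ∈ TupleLowerBounds m μ, CircPart.Preceq ν ν' → ν' = ν}

/-- A feasible subset `Γ` of `C_p(N₁) × ⋯ × C_p(N_m)`: nonempty, every element
has a meet, and distinct elements differ in every coordinate. -/
def Feasible (m : ℕ) (Ns : Fin m → XCactus X)
    (Γ : Set (Fin m → CircPart X)) : Prop :=
  Γ.Nonempty ∧ (∀ μ ∈ Γ, ∀ i : Fin m, μ i ∈ (Ns i).properSet) ∧
  (∀ μ ∈ Γ, (TupleGlb m μ).Nonempty) ∧
  (∀ μ ∈ Γ, ∀ μ' ∈ Γ, μ ≠ μ' → ∀ i : Fin m, μ i ≠ μ' i)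

/-- A meet realization of a feasible set `Γ`: a set of circular partitions
containing exactly one greatest lower bound for each element of `Γ`, minimal
under inclusion with this property. -/
def MeetRealization (m : ℕ) (Γ : Set (Fin m → CircPart X))
    (C : Set (CircPart X)) : Prop :=
  (∀ μ ∈ Γ, ∃! ν, ν ∈ C ∧ ν ∈ TupleGlb m μ) ∧
  ∀ C' ⊆ C, (∀ μ ∈ Γ, ∃! ν, ν ∈ C' ∧ ν ∈ TupleGlb m μ) → C' = C

end PhyloCactus

open PhyloCactus


section CompatAux

namespace PhyloCactus
open SimpleGraph Walk

variable {V : Type} {G : SimpleGraph V}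

lemma closed_decomp {w : V} (c : G.Walk w w) (hnil : ¬ c.Nil) :
    ∃ (x : V) (q : G.Walk w x) (h' : G.Adj x w), c = q.concat h' := by
  cases c with
  | nil => exact absurd Walk.Nil.nil hnil
  | cons h p =>
    obtain ⟨x, q, h', hq⟩ := Walk.exists_cons_eq_concat h p
    exact ⟨x, q, h', hq⟩

lemma mem_support_tail_of_closed {v u : V} (c : G.Walk v v) (hc : ¬ c.Nil)
    (h : u ∈ c.support) : u ∈ c.support.tail := by
  obtain ⟨x, q, h', rfl⟩ := closed_decomp c hc
  rw [Walk.support_concat] at h ⊢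
  rw [List.tail_append_of_ne_nil q.support_ne_nil]
  rw [q.support_eq_cons] at h
  rcases List.mem_append.1 h with h | h
  · rcases List.mem_cons.1 h with h | h
    · subst h; simp
    · exact List.mem_append.2 (Or.inl h)
  · exact List.mem_append.2 (Or.inr h)

lemma reverse_tail_closed {w : V} (c : G.Walk w w) (hnil : ¬ c.Nil) :
    c.reverse.support.tail = (c.support.tail.reverse).rotate 1 := by
  obtain ⟨x, q, h', rfl⟩ := closed_decomp c hnil
  rw [Walk.reverse_concat, Walk.support_cons, List.tail_cons, Walk.support_reverse,
    Walk.support_concat,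
    List.tail_append_of_ne_nil q.support_ne_nil]
  conv_lhs => rw [q.support_eq_cons]
  simp [List.rotate_cons_succ]

lemma isCycle_reverse {w : V} {c : G.Walk w w} (hc : c.IsCycle) : c.reverse.IsCycle := by
  rw [Walk.isCycle_def]
  refine ⟨Walk.IsTrail.reverse _ hc.isTrail, ?_, ?_⟩
  · intro h
    exact hc.ne_nil (by simpa using congrArg Walk.reverse h)
  · obtain ⟨x, q, h', hq⟩ := closed_decomp c hc.not_nil
    have htail : c.support.tail = q.support.tail ++ [w] := by
      rw [hq, Walk.support_concat,
        List.tail_append_of_ne_nil q.support_ne_nil]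
    have hrev : c.reverse.support.tail = q.support.reverse := by
      rw [hq, Walk.reverse_concat, Walk.support_cons, List.tail_cons, Walk.support_reverse]
    rw [hrev, List.nodup_reverse]
    have hnd : (q.support.tail ++ [w]).Nodup := htail ▸ hc.2
    rw [List.nodup_append] at hnd
    rw [q.support_eq_cons, List.nodup_cons]
    exact ⟨fun hw => hnd.2.2 w hw w (by simp) rfl, hnd.1⟩


lemma reach_or_reach_P {s : Set (Sym2 V)} {P : V → Prop}
    (hs : ∀ a c : V, s(a, c) ∈ s → P a) :
    ∀ {a b : V}, G.Walk a b →
      (G.deleteEdges s).Reachable a b ∨ ∃ z, P z ∧ (G.deleteEdges s).Reachable a z := by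
  intro a b p
  induction p with
  | nil => exact Or.inl (Reachable.refl _)
  | @cons u v w h q ih =>
    by_cases hm : s(u, v) ∈ s
    · exact Or.inr ⟨u, hs u v hm, Reachable.refl _⟩
    · have hadj : (G.deleteEdges s).Adj u v := by
        rw [SimpleGraph.deleteEdges_adj]; exact ⟨h, hm⟩
      rcases ih with h' | ⟨z, hz, h'⟩
      · exact Or.inl (hadj.reachable.trans h')
      · exact Or.inr ⟨z, hz, hadj.reachable.trans h'⟩

lemma exists_reach_P {s : Set (Sym2 V)} {P : V → Prop}
    (hs : ∀ a c : V, s(a, c) ∈ s → P a) {a b : V} (hb : P b) (p : G.Walk a b) :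
    ∃ z, P z ∧ (G.deleteEdges s).Reachable a z := by
  rcases reach_or_reach_P hs p with h | h
  · exact ⟨b, hb, h⟩
  · exact h

lemma reachable_closed {s : Set (Sym2 V)} {v : V} (c : G.Walk v v) (hnil : ¬ c.Nil)
    (hdisj : ∀ e ∈ c.edges, e ∉ s) {u₁ u₂ : V}
    (h₁ : u₁ ∈ c.support) (h₂ : u₂ ∈ c.support) :
    (G.deleteEdges s).Reachable u₁ u₂ := by
  classical
  set d := c.rotate _ h₁ with hd
  have h₂' : u₂ ∈ d.support := by
    have ht : u₂ ∈ c.support.tail := mem_support_tail_of_closed c hnil h₂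
    rw [Walk.mem_support_iff]
    exact Or.inr (((Walk.support_rotate c _ h₁).mem_iff).2 ht)
  have hsub : ∀ e ∈ (d.takeUntil u₂ h₂').edges, e ∈ c.edges := fun e he =>
    ((Walk.rotate_edges c _ h₁).mem_iff).1 (Walk.edges_takeUntil_subset d h₂' he)
  have hW := (d.takeUntil u₂ h₂').transfer (G.deleteEdges s) ?_
  · exact hW.reachable
  · intro e he
    rw [SimpleGraph.edgeSet_deleteEdges]
    exact ⟨c.edges_subset_edgeSet (hsub e he), hdisj e (hsub e he)⟩

lemma path_eq_of_edges_subset {a b : V} (P : G.Walk a b) (hP : P.IsPath) :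
    ∀ (Q : G.Walk a b), Q.IsPath → (∀ e ∈ Q.edges, e ∈ P.edges) → Q = P := by
  induction P with
  | nil =>
    intro Q hQ _
    cases Q with
    | nil => rfl
    | cons h q =>
      exfalso
      rw [Walk.cons_isPath_iff] at hQ
      exact hQ.2 q.end_mem_support
  | @cons a c b h P₁ ih =>
    intro Q hQ hsub
    cases Q with
    | nil =>
      exfalso
      rw [Walk.cons_isPath_iff] at hP
      exact hP.2 P₁.end_mem_support
    | @cons _ c' _ h' Q₁ =>
      have hmem : s(a, c') ∈ (Walk.cons h P₁).edges := hsub _ (by simp)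
      rw [Walk.edges_cons, List.mem_cons] at hmem
      have hPP : P₁.IsPath ∧ a ∉ P₁.support := (Walk.cons_isPath_iff h P₁).1 hP
      have hQQ : Q₁.IsPath ∧ a ∉ Q₁.support := (Walk.cons_isPath_iff h' Q₁).1 hQ
      have hcc : c' = c := by
        rcases hmem with hm | hm
        · rcases Sym2.eq_iff.1 hm with ⟨_, rfl⟩ | ⟨rfl, rfl⟩
          · rfl
          · exact absurd rfl h.ne
        · exact absurd (P₁.fst_mem_support_of_mem_edges hm) hPP.2
      subst hcc
      have : Q₁ = P₁ := by
        refine ih hPP.1 Q₁ hQQ.1 (fun e he => ?_)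
        have := hsub e (by simp [he])
        rw [Walk.edges_cons, List.mem_cons] at this
        rcases this with rfl | h2
        · exact absurd (Q₁.fst_mem_support_of_mem_edges he) hQQ.2
        · exact h2
      rw [this]

lemma eq_first_edge {a c b : V} (h : G.Adj a c) (p : G.Walk c b)
    (hp : (Walk.cons h p).IsPath) {e : Sym2 V}
    (hin : e ∈ (Walk.cons h p).edges) (ha : a ∈ e) : e = s(a, c) := by
  rw [Walk.edges_cons, List.mem_cons] at hin
  rcases hin with hin | hin
  · exact hin
  · exfalso
    induction e with
    | h x y =>
      rw [Walk.cons_isPath_iff] at hp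
      rcases Sym2.mem_iff.1 ha with rfl | rfl
      · exact hp.2 (p.fst_mem_support_of_mem_edges hin)
      · exact hp.2 (p.snd_mem_support_of_mem_edges hin)

lemma cycle_eq_or_eq_reverse {w : V} (c c' : G.Walk w w) (hc : c.IsCycle) (hc' : c'.IsCycle)
    (he : ∀ e, e ∈ c'.edges → e ∈ c.edges) : c' = c ∨ c' = c.reverse := by
  cases c with
  | nil => exact absurd hc (Walk.IsCycle.not_of_nil)
  | @cons _ a _ h p =>
  cases c' with
  | nil => exact absurd hc' (Walk.IsCycle.not_of_nil)
  | @cons _ a' _ h' p' =>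
  have hcp := (Walk.cons_isCycle_iff p h).1 hc
  have hcp' := (Walk.cons_isCycle_iff p' h').1 hc'
  have hmem : s(w, a') ∈ (Walk.cons h p).edges := he _ (by simp)
  rw [Walk.edges_cons, List.mem_cons] at hmem
  rcases hmem with hm | hm
  · -- first edges equal
    have haa : a' = a := by
      rcases Sym2.eq_iff.1 hm with ⟨_, rfl⟩ | ⟨rfl, rfl⟩
      · rfl
      · exact absurd rfl h'.ne
    subst haa
    left
    have : p' = p := by
      refine path_eq_of_edges_subset p hcp.1 p' hcp'.1 (fun e heq => ?_)
      have := he e (by simp [heq])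
      rw [Walk.edges_cons, List.mem_cons] at this
      rcases this with rfl | h2
      · exact absurd heq hcp'.2
      · exact h2
    rw [this]
  · -- s(w,a') is an edge of p : last edge
    right
    obtain ⟨x, q, h₃, hq⟩ := Walk.exists_cons_eq_concat h p
    have hrev : (Walk.cons h p).reverse = Walk.cons h₃.symm q.reverse := by
      rw [hq, Walk.reverse_concat]
    have hrc : (Walk.cons h p).reverse.IsCycle := isCycle_reverse hc
    rw [hrev] at hrc
    have hrcp := (Walk.cons_isCycle_iff q.reverse h₃.symm).1 hrc
    -- show a' = x
    have hmem2 : s(w, a') ∈ (Walk.cons h₃.symm q.reverse).edges := by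
      rw [← hrev, Walk.edges_reverse, List.mem_reverse]
      exact List.mem_cons_of_mem _ hm
    rw [Walk.edges_cons, List.mem_cons] at hmem2
    rcases hmem2 with hm2 | hm2
    · have hax : a' = x := by
        rcases Sym2.eq_iff.1 hm2 with ⟨_, rfl⟩ | ⟨rfl, rfl⟩
        · rfl
        · exact absurd rfl h'.ne
      subst hax
      have : p' = q.reverse := by
        refine path_eq_of_edges_subset q.reverse hrcp.1 p' hcp'.1 (fun e heq => ?_)
        have h5 : e ∈ (Walk.cons h₃.symm q.reverse).edges := by
          rw [← hrev, Walk.edges_reverse, List.mem_reverse]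
          exact he e (by simp [heq])
        rw [Walk.edges_cons, List.mem_cons] at h5
        rcases h5 with rfl | h5
        · exact absurd heq hcp'.2
        · exact h5
      rw [hrev, this]
    · -- s(w,a') ∈ q.reverse.edges : impossible
      exfalso
      -- q : Walk w x, edge containing w inside q must be first edge of q
      have hqe : s(w, a') ∈ q.edges := by
        rwa [Walk.edges_reverse, List.mem_reverse] at hm2
      cases q with
      | nil => simp at hqe
      | @cons _ m _ h₄ q₁ =>
        have hqpath : (Walk.cons h₄ q₁).IsPath := by
          have := hrcp.1.reverse
          rwa [Walk.reverse_reverse] at this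
        have := eq_first_edge h₄ q₁ hqpath hqe (by simp)
        have ham : a' = m := by
          rcases Sym2.eq_iff.1 this with ⟨_, rfl⟩ | ⟨rfl, rfl⟩
          · rfl
          · exact absurd rfl h'.ne
        -- first edge of q is first edge of c, i.e. s(w,m) = s(w,a)
        have hq' : Walk.cons h p = Walk.cons h₄ (q₁.concat h₃) := by
          rw [hq, Walk.concat_cons]
        have ham2 : m = a := by
          have := congrArg (fun z => z.getVert 1) hq'
          simpa using this.symm
        subst ham; subst ham2
        exact hcp.2 hm
/-- rotation/reversal step relation on lists -/
def RotRev {α : Type*} (l l' : List α) : Prop := l' = l.rotate 1 ∨ l' = l.reverse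

lemma eqvgen_rotate {α : Type*} (l : List α) (n : ℕ) :
    Relation.EqvGen RotRev l (l.rotate n) := by
  induction n with
  | zero => rw [List.rotate_zero]; exact Relation.EqvGen.refl l
  | succ n ih =>
    have : l.rotate (n + 1) = (l.rotate n).rotate 1 := by rw [List.rotate_rotate]
    rw [this]
    exact Relation.EqvGen.trans _ _ _ ih (Relation.EqvGen.rel _ _ (Or.inl rfl))

lemma eqvgen_map {α β : Type*} (f : α → β) {l l' : List α}
    (h : Relation.EqvGen RotRev l l') :
    Relation.EqvGen RotRev (l.map f) (l'.map f) := by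
  induction h with
  | rel a b hab =>
    refine Relation.EqvGen.rel _ _ ?_
    rcases hab with rfl | rfl
    · exact Or.inl (by rw [List.map_rotate])
    · exact Or.inr (by rw [List.map_reverse])
  | refl a => exact Relation.EqvGen.refl _
  | symm a b _ ih => exact Relation.EqvGen.symm _ _ ih
  | trans a b c _ _ ih1 ih2 => exact Relation.EqvGen.trans _ _ _ ih1 ih2



lemma cycle_tail_eqvgen {v v' : V} (c : G.Walk v v) (c' : G.Walk v' v')
    (hc : c.IsCycle) (hc' : c'.IsCycle)
    (he : ∀ e, e ∈ c'.edges ↔ e ∈ c.edges) :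
    Relation.EqvGen RotRev c.support.tail c'.support.tail := by
  classical
  have hv' : v' ∈ c.support := by
    cases c' with
    | nil => exact absurd hc' Walk.IsCycle.not_of_nil
    | @cons _ a' _ h' p' =>
      have : s(v', a') ∈ c.edges := (he _).1 (by simp)
      exact c.fst_mem_support_of_mem_edges this
  set d := c.rotate _ hv' with hd
  have hdc : d.IsCycle := hc.rotate hv'
  have hde : ∀ e, e ∈ c'.edges → e ∈ d.edges := fun e hee =>
    ((Walk.rotate_edges c _ hv').mem_iff).2 ((he e).1 hee)
  have hrot : Relation.EqvGen RotRev c.support.tail d.support.tail := by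
    obtain ⟨n, hn⟩ := (Walk.support_rotate c _ hv').symm
    rw [← hn]
    exact eqvgen_rotate _ n
  rcases cycle_eq_or_eq_reverse d c' hdc hc' hde with h | h
  · rw [h]; exact hrot
  · rw [h]
    rw [reverse_tail_closed d hdc.not_nil]
    refine Relation.EqvGen.trans _ _ _ hrot ?_
    refine Relation.EqvGen.trans _ _ _ (Relation.EqvGen.rel _ _ (Or.inr rfl)) ?_
    exact Relation.EqvGen.rel _ _ (Or.inl rfl)

lemma core_two_blocks (hG : G.Connected) (s₁ s₂ : Set (Sym2 V)) (vs₁ vs₂ : List V)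
    (h1 : ∀ a c : V, s(a, c) ∈ s₁ → a ∈ vs₁) (h2 : ∀ a c : V, s(a, c) ∈ s₂ → a ∈ vs₂)
    (hdisj : ∀ e ∈ s₁, e ∉ s₂)
    (hconn1 : ∀ u ∈ vs₁, ∀ u' ∈ vs₁, ∀ s : Set (Sym2 V),
      (∀ e ∈ s, e ∉ s₁) → (G.deleteEdges s).Reachable u u')
    (hconn2 : ∀ u ∈ vs₂, ∀ u' ∈ vs₂, ∀ s : Set (Sym2 V),
      (∀ e ∈ s, e ∉ s₂) → (G.deleteEdges s).Reachable u u')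
    (hne1 : vs₁ ≠ []) (hne2 : vs₂ ≠ []) :
    ∃ w₁ ∈ vs₁, ∃ w₂ ∈ vs₂, ∀ t : V,
      (G.deleteEdges s₁).Reachable w₁ t ∨ (G.deleteEdges s₂).Reachable w₂ t := by
  have hdisj' : ∀ e ∈ s₂, e ∉ s₁ := fun e he hn => hdisj e hn he
  set a₁ := vs₁.head hne1 with ha₁
  set a₂ := vs₂.head hne2 with ha₂
  have ha₁m : a₁ ∈ vs₁ := List.head_mem hne1
  have ha₂m : a₂ ∈ vs₂ := List.head_mem hne2
  obtain ⟨w₁, hw₁, hr₁⟩ : ∃ z, z ∈ vs₁ ∧ (G.deleteEdges s₁).Reachable a₂ z :=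
    (hG.preconnected a₂ a₁).elim fun p => exists_reach_P h1 ha₁m p
  obtain ⟨w₂, hw₂, hr₂⟩ : ∃ z, z ∈ vs₂ ∧ (G.deleteEdges s₂).Reachable a₁ z :=
    (hG.preconnected a₁ a₂).elim fun p => exists_reach_P h2 ha₂m p
  have hw1all : ∀ u ∈ vs₂, (G.deleteEdges s₁).Reachable w₁ u := fun u hu =>
    (hr₁.symm.trans (hconn2 a₂ ha₂m u hu s₁ hdisj)).symm.symm
  have hw2all : ∀ u ∈ vs₁, (G.deleteEdges s₂).Reachable w₂ u := fun u hu =>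
    hr₂.symm.trans (hconn1 a₁ ha₁m u hu s₂ hdisj')
  refine ⟨w₁, hw₁, w₂, hw₂, fun t => ?_⟩
  by_cases hr : (G.deleteEdges s₁).Reachable w₁ t
  · exact Or.inl hr
  right
  obtain ⟨p⟩ := hG.preconnected t w₂
  rcases reach_or_reach_P h2 p with h | ⟨y, hy, hry⟩
  · exact h.symm
  · -- walk from t to y in G - s₂, split at s₁ edges
    obtain ⟨q⟩ := hry
    have hmono1 : (G.deleteEdges s₂).deleteEdges s₁ ≤ G.deleteEdges s₁ := by
      intro x y hxy
      rw [SimpleGraph.deleteEdges_adj] at hxy ⊢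
      rw [SimpleGraph.deleteEdges_adj] at hxy
      exact ⟨hxy.1.1, hxy.2⟩
    have hmono2 : (G.deleteEdges s₂).deleteEdges s₁ ≤ G.deleteEdges s₂ :=
      SimpleGraph.deleteEdges_le _
    rcases reach_or_reach_P (G := G.deleteEdges s₂) h1 q with h | ⟨z, hz, hrz⟩
    · exfalso
      exact hr ((hw1all y hy).trans (h.mono hmono1).symm)
    · exact (hw2all z hz).trans (hrz.mono hmono2).symm


namespace XCactus

variable {X : Type}

/-- Convenient properties of the edge set / vertex list of a block. -/
def GoodBlock (N : XCactus X) (s : Set (Sym2 N.V)) (vs : List N.V) : Prop :=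
  vs ≠ [] ∧ (∀ a c : N.V, s(a, c) ∈ s → a ∈ vs) ∧
    ∀ u ∈ vs, ∀ u' ∈ vs, ∀ t : Set (Sym2 N.V),
      (∀ e ∈ t, e ∉ s) → (N.G.deleteEdges t).Reachable u u'

lemma bridge_good (N : XCactus X) {u v : N.V} (hbr : N.G.IsBridge s(u, v)) :
    GoodBlock N {s(u, v)} [u, v] := by
  have hadj : N.G.Adj u v := hbr.reachable_iff_adj.1 (N.connected.preconnected u v)
  refine ⟨by simp, ?_, ?_⟩
  · intro a c h
    rw [Set.mem_singleton_iff] at h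
    rcases Sym2.eq_iff.1 h with ⟨rfl, rfl⟩ | ⟨rfl, rfl⟩ <;> simp
  · intro x hx y hy t ht
    have hnot : s(u, v) ∉ t := fun hh => ht _ hh rfl
    have hadj' : (N.G.deleteEdges t).Adj u v := by
      rw [SimpleGraph.deleteEdges_adj]; exact ⟨hadj, hnot⟩
    simp only [List.mem_cons, List.mem_singleton, List.not_mem_nil, or_false] at hx hy
    rcases hx with rfl | rfl <;> rcases hy with rfl | rfl
    · exact Reachable.refl _
    · exact hadj'.reachable
    · exact hadj'.reachable.symm
    · exact Reachable.refl _

lemma cycle_good (N : XCactus X) {v : N.V} {c : N.G.Walk v v} (hcyc : c.IsCycle) :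
    GoodBlock N {e | e ∈ c.edges} c.support.tail := by
  refine ⟨?_, ?_, ?_⟩
  · have h3 := hcyc.three_le_length
    have hlen : c.support.tail.length = c.length := by
      rw [List.length_tail, c.length_support]; omega
    intro h
    rw [h] at hlen
    simp at hlen
    omega
  · intro a b h
    exact mem_support_tail_of_closed c hcyc.not_nil (c.fst_mem_support_of_mem_edges h)
  · intro x hx y hy t ht
    exact reachable_closed c hcyc.not_nil (fun e he hs => ht e hs he)
      (c.support_eq_cons ▸ List.mem_cons_of_mem _ hx)
      (c.support_eq_cons ▸ List.mem_cons_of_mem _ hy)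

lemma compat_aux (N : XCactus X) {l l' : PartList X} {s s' : Set (Sym2 N.V)}
    {vs vs' : List N.V}
    (hl : l.1 = N.blockList s vs) (hl' : l'.1 = N.blockList s' vs')
    (hg : GoodBlock N s vs) (hg' : GoodBlock N s' vs')
    (hdisj : ∀ e ∈ s, e ∉ s') :
    PartCompatible (CircPart.mk l).parts (CircPart.mk l').parts := by
  obtain ⟨w₁, hw₁, w₂, hw₂, hall⟩ :=
    core_two_blocks N.connected s s' vs vs' hg.2.1 hg'.2.1 hdisj hg.2.2 hg'.2.2 hg.1 hg'.1
  refine ⟨N.compPart s w₁, ⟨l, rfl, ?_⟩, N.compPart s' w₂, ⟨l', rfl, ?_⟩, ?_⟩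
  · rw [hl]; exact List.mem_map_of_mem hw₁
  · rw [hl']; exact List.mem_map_of_mem hw₂
  · apply Set.eq_univ_of_forall
    intro x
    rcases hall (N.φ x) with h | h
    · exact Or.inl h
    · exact Or.inr h

lemma mk_eq_of_eqvgen {l l' : PartList X}
    (h : Relation.EqvGen RotRev l.1 l'.1) : CircPart.mk l = CircPart.mk l' :=
  Quot.sound h

lemma mk_eq_bridge_bridge (N : XCactus X) {l l' : PartList X} {u v u' v' : N.V}
    (hl : l.1 = N.blockList {s(u, v)} [u, v])
    (hl' : l'.1 = N.blockList {s(u', v')} [u', v'])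
    (heq : s(u, v) = s(u', v')) : CircPart.mk l = CircPart.mk l' := by
  apply mk_eq_of_eqvgen
  have hsets : ({s(u, v)} : Set (Sym2 N.V)) = {s(u', v')} := by rw [heq]
  rcases Sym2.eq_iff.1 heq with ⟨h1, h2⟩ | ⟨h1, h2⟩
  · subst h1; subst h2
    rw [hl, hl']
    exact Relation.EqvGen.refl _
  · subst h1; subst h2
    rw [hl, hl']
    refine Relation.EqvGen.rel _ _ (Or.inr ?_)
    have hss : ({s(v, u)} : Set (Sym2 N.V)) = {s(u, v)} := by rw [Sym2.eq_swap]
    rw [hss]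
    rfl

lemma mk_eq_cycle_cycle (N : XCactus X) {l l' : PartList X} {v₁ v₂ : N.V}
    {c₁ : N.G.Walk v₁ v₁} {c₂ : N.G.Walk v₂ v₂}
    (hc₁ : c₁.IsCycle) (hc₂ : c₂.IsCycle)
    (hl : l.1 = N.blockList {e | e ∈ c₁.edges} c₁.support.tail)
    (hl' : l'.1 = N.blockList {e | e ∈ c₂.edges} c₂.support.tail)
    (hset : ∀ e, e ∈ c₂.edges ↔ e ∈ c₁.edges) : CircPart.mk l = CircPart.mk l' := by
  apply mk_eq_of_eqvgen
  have hsets : {e | e ∈ c₁.edges} = {e | e ∈ c₂.edges} := Set.ext fun e => (hset e).symm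
  rw [hl, hl', ← hsets]
  exact eqvgen_map (N.compPart {e | e ∈ c₁.edges}) (cycle_tail_eqvgen c₁ c₂ hc₁ hc₂ hset)

end XCactus

end PhyloCactus

end CompatAux


/-- For every `X`-cactus `N`, the set `C(N)` of circular partitions induced by
the blocks of `N` is a compatible set of circular partitions of `X`. -/
theorem circSet_compatible
    (X : Type) [Fintype X] (hX : 2 ≤ Fintype.card X) (N : XCactus X) :
    CompatibleFamily N.circSet := by
  classical
  intro σ hσ τ hτ hne
  obtain ⟨l, hσl, hlcase⟩ := hσ
  obtain ⟨l', hτl, hlcase'⟩ := hτ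
  subst hσl; subst hτl
  show PartCompatible (CircPart.mk l).parts (CircPart.mk l').parts
  rcases hlcase with ⟨u, v, hbr, hl⟩ | ⟨v₁, c₁, hc₁, hl⟩ <;>
    rcases hlcase' with ⟨u', v', hbr', hl'⟩ | ⟨v₂, c₂, hc₂, hl'⟩
  · -- bridge / bridge
    by_cases heq : s(u, v) = s(u', v')
    · exact absurd (XCactus.mk_eq_bridge_bridge N hl hl' heq) hne
    · refine XCactus.compat_aux N hl hl' (XCactus.bridge_good N hbr)
        (XCactus.bridge_good N hbr') ?_
      intro e he he'
      rw [Set.mem_singleton_iff] at he he'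
      exact heq (he ▸ he')
  · -- bridge / cycle
    refine XCactus.compat_aux N hl hl' (XCactus.bridge_good N hbr)
      (XCactus.cycle_good N hc₂) ?_
    intro e he he'
    rw [Set.mem_singleton_iff] at he
    subst he
    exact hbr.notMem_edges_of_isCycle hc₂ he'
  · -- cycle / bridge
    refine XCactus.compat_aux N hl hl' (XCactus.cycle_good N hc₁)
      (XCactus.bridge_good N hbr') ?_
    intro e he he'
    rw [Set.mem_singleton_iff] at he'
    subst he'
    exact hbr'.notMem_edges_of_isCycle hc₁ he
  · -- cycle / cycle
    by_cases hset : ∀ e, e ∈ c₂.edges ↔ e ∈ c₁.edges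
    · exact absurd (XCactus.mk_eq_cycle_cycle N hc₁ hc₂ hl hl' hset) hne
    · have hnesets : {e | e ∈ c₁.edges} ≠ {e | e ∈ c₂.edges} := by
        intro h
        exact hset fun e => by
          rw [Set.ext_iff] at h
          exact (h e).symm
      have hsub := N.cactus c₁ c₂ hc₁ hc₂ hnesets
      refine XCactus.compat_aux N hl hl' (XCactus.cycle_good N hc₁)
        (XCactus.cycle_good N hc₂) ?_
      intro e he he'
      induction e with
      | h x y =>
        have hx : x ∈ c₁.support ∧ x ∈ c₂.support :=
          ⟨c₁.fst_mem_support_of_mem_edges he, c₂.fst_mem_support_of_mem_edges he'⟩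
        have hy : y ∈ c₁.support ∧ y ∈ c₂.support :=
          ⟨c₁.snd_mem_support_of_mem_edges he, c₂.snd_mem_support_of_mem_edges he'⟩
        have hxy : x = y := hsub hx hy
        have hadj : N.G.Adj x y := (SimpleGraph.mem_edgeSet N.G).1 (c₁.edges_subset_edgeSet he)
        exact hadj.ne hxy
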